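/- Every first-countable compact Hausdorff topological space has cardinality at most the cardinality of the continuum (2^ℵ₀). -/

import Mathlib

open Cardinal

section ArhAux
open Set Filter Topology

universe v

variable {X : Type v} [TopologicalSpace X]

open Classical in
noncomputable def arhPick (b : X → ℕ → Set X) (x₀ : X) (c : ℕ → X × ℕ) : X :=
  if h : ((⋃ n, b (c n).1 (c n).2)ᶜ : Set X).Nonempty then h.some else x₀

/-- The set of witness points for countable families of basic open sets
centered in `A`. -/
noncomputable def arhWit (b : X → ℕ → Set X) (x₀ : X) (A : Set X) : Set X :=
  (arhPick b x₀) '' {c : ℕ → X × ℕ | ∀ n, (c n).1 ∈ A}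

/-- The transfinite closure hierarchy. -/
noncomputable def arhF (b : X → ℕ → Set X) (x₀ : X) : Ordinal.{v} → Set X :=
  fun α =>
    closure (({x₀} ∪ ⋃ β : Set.Iio α, arhF b x₀ β.1) ∪
      arhWit b x₀ ({x₀} ∪ ⋃ β : Set.Iio α, arhF b x₀ β.1))
termination_by α => α
decreasing_by all_goals exact β.2

/-- The union of previous stages (plus the basepoint). -/
noncomputable def arhPrev (b : X → ℕ → Set X) (x₀ : X) (α : Ordinal.{v}) : Set X :=
  {x₀} ∪ ⋃ β : Set.Iio α, arhF b x₀ β.1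

theorem arhF_eq (b : X → ℕ → Set X) (x₀ : X) (α : Ordinal.{v}) :
    arhF b x₀ α = closure (arhPrev b x₀ α ∪ arhWit b x₀ (arhPrev b x₀ α)) := by
  rw [arhF]; rfl

theorem arhPrev_subset (b : X → ℕ → Set X) (x₀ : X) (α : Ordinal.{v}) :
    arhPrev b x₀ α ⊆ arhF b x₀ α := by
  rw [arhF_eq]
  exact subset_trans Set.subset_union_left subset_closure

theorem arhWit_subset (b : X → ℕ → Set X) (x₀ : X) (α : Ordinal.{v}) :
    arhWit b x₀ (arhPrev b x₀ α) ⊆ arhF b x₀ α := by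
  rw [arhF_eq]
  exact subset_trans Set.subset_union_right subset_closure

theorem x₀_mem_arhPrev (b : X → ℕ → Set X) (x₀ : X) (α : Ordinal.{v}) :
    x₀ ∈ arhPrev b x₀ α := Or.inl rfl

theorem arhF_subset_prev (b : X → ℕ → Set X) (x₀ : X) {β α : Ordinal.{v}}
    (h : β < α) : arhF b x₀ β ⊆ arhPrev b x₀ α := by
  refine subset_trans ?_ (Set.subset_union_right)
  exact Set.subset_iUnion (fun γ : Set.Iio α => arhF b x₀ γ.1) ⟨β, h⟩

/-- Cardinality of a set of sequences valued in `A × ℕ`. -/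
theorem arh_mk_seq_le {A : Set X} (hA : #A ≤ 𝔠) :
    #{c : ℕ → X × ℕ | ∀ n, (c n).1 ∈ A} ≤ 𝔠 := by
  have hf : Function.Injective
      (fun (c : {c : ℕ → X × ℕ | ∀ n, (c n).1 ∈ A}) (n : ℕ) =>
        ((⟨(c.1 n).1, c.2 n⟩, (c.1 n).2) : A × ℕ)) := by
    intro c d h
    have h1 := congrFun h
    apply Subtype.ext
    funext n
    obtain ⟨ha, hb⟩ := Prod.ext_iff.1 (h1 n)
    exact Prod.ext (congrArg Subtype.val ha) hb
  refine (Cardinal.mk_le_of_injective hf).trans ?_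
  have h1 : #(ℕ → A × ℕ) = #(A × ℕ) ^ (ℵ₀ : Cardinal.{v}) := by
    rw [Cardinal.mk_arrow]
    simp
  rw [h1]
  have h2 : #(A × ℕ) ≤ 𝔠 := by
    rw [Cardinal.mk_prod, Cardinal.mk_nat, Cardinal.lift_aleph0,
      Cardinal.lift_uzero]
    calc #A * ℵ₀ ≤ 𝔠 * 𝔠 :=
          mul_le_mul' hA Cardinal.aleph0_le_continuum
      _ = 𝔠 := Cardinal.continuum_mul_self
  calc #(A × ℕ) ^ (ℵ₀ : Cardinal.{v}) ≤ 𝔠 ^ (ℵ₀ : Cardinal.{v}) :=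
        Cardinal.power_le_power_right h2
    _ = 𝔠 := Cardinal.continuum_power_aleph0

theorem arh_mk_wit_le (b : X → ℕ → Set X) (x₀ : X) {A : Set X} (hA : #A ≤ 𝔠) :
    #(arhWit b x₀ A) ≤ 𝔠 :=
  (Cardinal.mk_image_le).trans (arh_mk_seq_le hA)

/-- In a Fréchet–Urysohn Hausdorff space, closure does not increase
cardinality beyond the continuum. -/
theorem arh_mk_closure_le [T2Space X] [FrechetUrysohnSpace X] {A : Set X}
    (hA : #A ≤ 𝔠) : #(closure A) ≤ 𝔠 := by
  have key : ∀ x : closure A, ∃ u : ℕ → X, (∀ n, u n ∈ A) ∧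
      Tendsto u atTop (𝓝 x.1) := fun x => mem_closure_iff_seq_limit.1 x.2
  choose u hu hul using key
  have hf : Function.Injective
      (fun (x : closure A) (n : ℕ) => (⟨u x n, hu x n⟩ : A)) := by
    intro x y h
    have : u x = u y :=
      funext fun n => congrArg Subtype.val (congrFun h n)
    have h2 : Tendsto (u x) atTop (𝓝 y.1) := this ▸ hul y
    exact Subtype.ext (tendsto_nhds_unique (hul x) h2)
  refine (Cardinal.mk_le_of_injective hf).trans ?_
  have h1 : #(ℕ → A) = #A ^ (ℵ₀ : Cardinal.{v}) := by
    rw [Cardinal.mk_arrow]; simp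
  rw [h1]
  calc #A ^ (ℵ₀ : Cardinal.{v}) ≤ 𝔠 ^ (ℵ₀ : Cardinal.{v}) :=
        Cardinal.power_le_power_right hA
    _ = 𝔠 := Cardinal.continuum_power_aleph0

theorem arh_mk_F_le [T2Space X] [FrechetUrysohnSpace X]
    (b : X → ℕ → Set X) (x₀ : X) :
    ∀ α : Ordinal.{v}, α < (Cardinal.aleph 1 : Cardinal.{v}).ord →
      #(arhF b x₀ α) ≤ 𝔠 := by
  intro α
  induction α using Ordinal.induction with
  | h α IH =>
    intro hα
    have hprev : #(arhPrev b x₀ α) ≤ 𝔠 := by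
      have hUnion : #(⋃ β : Set.Iio α, arhF b x₀ β.1) ≤ 𝔠 := by
        rcases isEmpty_or_nonempty (Set.Iio α) with hE | hNE
        · rw [Set.iUnion_of_empty]
          simpa using Cardinal.aleph0_le_continuum.trans' Cardinal.aleph0_pos.le
        · have hcount : Countable (Set.Iio α) := by
            refine Cardinal.mk_le_aleph0_iff.1 ?_
            rw [Ordinal.mk_Iio_ordinal]
            have : α.card < Cardinal.aleph 1 := by
              rwa [← Cardinal.lt_ord]
            have h9 : α.card ≤ ℵ₀ := by
              rwa [← Order.lt_succ_iff, Cardinal.succ_aleph0]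
            calc Cardinal.lift.{v+1} α.card ≤ Cardinal.lift.{v+1} ℵ₀ :=
                  Cardinal.lift_le.2 h9
              _ = ℵ₀ := Cardinal.lift_aleph0
          obtain ⟨g, hg⟩ := exists_surjective_nat (Set.Iio α)
          have heq : (⋃ β : Set.Iio α, arhF b x₀ β.1) =
              ⋃ n : ULift.{v} ℕ, arhF b x₀ (g n.down).1 := by
            apply Set.Subset.antisymm
            · refine Set.iUnion_subset fun β => ?_
              obtain ⟨n, hn⟩ := hg β
              exact subset_trans (by rw [hn]) (Set.subset_iUnion _ (ULift.up n))
            · exact Set.iUnion_subset fun n =>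
                Set.subset_iUnion (fun β : Set.Iio α => arhF b x₀ β.1) (g n.down)
          rw [heq]
          refine (Cardinal.mk_iUnion_le _).trans ?_
          have h3 : #(ULift.{v} ℕ) = (ℵ₀ : Cardinal.{v}) := by simp
          have h4 : ⨆ n : ULift.{v} ℕ, #(arhF b x₀ (g n.down).1) ≤ 𝔠 := by
            refine ciSup_le' fun n => IH _ (g n.down).2 ((g n.down).2.trans hα)
          calc #(ULift.{v} ℕ) * ⨆ n : ULift.{v} ℕ, #(arhF b x₀ (g n.down).1)
              ≤ ℵ₀ * 𝔠 := by rw [h3]; exact mul_le_mul' le_rfl h4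
            _ = 𝔠 := Cardinal.aleph0_mul_continuum
      refine (Cardinal.mk_union_le _ _).trans ?_
      have h5 : #({x₀} : Set X) ≤ 𝔠 := by
        simp only [Cardinal.mk_singleton]
        exact Cardinal.one_le_aleph0.trans Cardinal.aleph0_le_continuum
      calc #({x₀} : Set X) + #(⋃ β : Set.Iio α, arhF b x₀ β.1) ≤ 𝔠 + 𝔠 :=
            add_le_add h5 hUnion
        _ = 𝔠 := Cardinal.add_eq_self Cardinal.aleph0_le_continuum
    rw [arhF_eq]
    refine arh_mk_closure_le ?_
    refine (Cardinal.mk_union_le _ _).trans ?_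
    calc #(arhPrev b x₀ α) + #(arhWit b x₀ (arhPrev b x₀ α)) ≤ 𝔠 + 𝔠 :=
          add_le_add hprev (arh_mk_wit_le b x₀ hprev)
      _ = 𝔠 := Cardinal.add_eq_self Cardinal.aleph0_le_continuum

/-- The full union over all countable stages. -/
noncomputable def arhTot (b : X → ℕ → Set X) (x₀ : X) : Set X :=
  ⋃ i : (Cardinal.aleph 1 : Cardinal.{v}).ord.ToType,
    arhF b x₀ (((Ordinal.ToType.mk (o := (Cardinal.aleph 1 : Cardinal.{v}).ord)).symm i).1)

theorem arh_mem_tot {b : X → ℕ → Set X} {x₀ : X} {x : X} :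
    x ∈ arhTot b x₀ ↔ ∃ α : Ordinal.{v},
      α < (Cardinal.aleph 1 : Cardinal.{v}).ord ∧ x ∈ arhF b x₀ α := by
  simp only [arhTot, Set.mem_iUnion]
  constructor
  · intro hx
    obtain ⟨i, hi⟩ := hx
    exact ⟨_, ((Ordinal.ToType.mk (o := (Cardinal.aleph 1 : Cardinal.{v}).ord)).symm i).2, hi⟩
  · rintro ⟨α, hα, hx⟩
    refine ⟨Ordinal.ToType.mk (o := (Cardinal.aleph 1 : Cardinal.{v}).ord) ⟨α, hα⟩, ?_⟩
    rw [OrderIso.symm_apply_apply]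
    exact hx

theorem arh_mk_tot_le [T2Space X] [FrechetUrysohnSpace X]
    (b : X → ℕ → Set X) (x₀ : X) : #(arhTot b x₀) ≤ 𝔠 := by
  rw [arhTot]
  refine (Cardinal.mk_iUnion_le _).trans ?_
  have h1 : #((Cardinal.aleph 1 : Cardinal.{v}).ord.ToType) =
      Cardinal.aleph 1 := by
    rw [Cardinal.mk_toType, Cardinal.card_ord]
  have h2 : (⨆ i : (Cardinal.aleph 1 : Cardinal.{v}).ord.ToType,
      #(arhF b x₀ (((Ordinal.ToType.mk (o := (Cardinal.aleph 1 : Cardinal.{v}).ord)).symm i).1))) ≤ 𝔠 :=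
    ciSup_le' fun i => arh_mk_F_le b x₀ _ ((Ordinal.ToType.mk (o := (Cardinal.aleph 1 : Cardinal.{v}).ord)).symm i).2
  calc #((Cardinal.aleph 1 : Cardinal.{v}).ord.ToType) *
        (⨆ i : (Cardinal.aleph 1 : Cardinal.{v}).ord.ToType,
          #(arhF b x₀ (((Ordinal.ToType.mk (o := (Cardinal.aleph 1 : Cardinal.{v}).ord)).symm i).1)))
      ≤ Cardinal.aleph 1 * 𝔠 := by rw [h1]; exact mul_le_mul' le_rfl h2
    _ ≤ 𝔠 * 𝔠 := mul_le_mul' Cardinal.aleph_one_le_continuum le_rfl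
    _ = 𝔠 := Cardinal.continuum_mul_self

theorem arh_tot_closed [T2Space X] [FrechetUrysohnSpace X]
    (b : X → ℕ → Set X) (x₀ : X) : IsClosed (arhTot b x₀) := by
  rw [← closure_subset_iff_isClosed]
  intro x hx
  obtain ⟨u, hu, hul⟩ := mem_closure_iff_seq_limit.1 hx
  choose α hαlt hαmem using fun n => arh_mem_tot.1 (hu n)
  have hs : (⨆ n, α n) < (Cardinal.aleph 1 : Cardinal.{v}).ord := by
    refine Ordinal.iSup_lt_ord_lift ?_ hαlt
    rw [Cardinal.isRegular_aleph_one.cof_eq]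
    simpa using Cardinal.aleph0_lt_aleph_one
  have hlim : Order.IsSuccLimit ((Cardinal.aleph 1 : Cardinal.{v}).ord) :=
    Cardinal.isSuccLimit_ord (Cardinal.aleph0_le_aleph 1)
  have hsucc : (⨆ n, α n) + 1 < (Cardinal.aleph 1 : Cardinal.{v}).ord := by
    have := hlim.succ_lt hs
    simpa [Order.succ] using this
  refine arh_mem_tot.2 ⟨(⨆ n, α n) + 1, hsucc, ?_⟩
  have hsub : ∀ n, u n ∈ arhPrev b x₀ ((⨆ n, α n) + 1) := by
    intro n
    have h1 : α n < (⨆ n, α n) + 1 :=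
      lt_of_le_of_lt (Ordinal.le_iSup α n) (Order.lt_succ _)
    exact arhF_subset_prev b x₀ h1 (hαmem n)
  have : x ∈ closure (arhPrev b x₀ ((⨆ n, α n) + 1)) :=
    mem_closure_of_tendsto hul (Filter.Eventually.of_forall hsub)
  rw [arhF_eq]
  exact closure_mono Set.subset_union_left this

theorem arh_tot_eq_univ [T2Space X] [CompactSpace X] [FrechetUrysohnSpace X]
    (b : X → ℕ → Set X) (x₀ : X)
    (hb_open : ∀ x n, IsOpen (b x n)) (hb_mem : ∀ x n, x ∈ b x n)
    (hb_basis : ∀ x : X, ∀ s ∈ 𝓝 x, ∃ n, b x n ⊆ s) :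
    arhTot b x₀ = Set.univ := by
  by_contra hne
  obtain ⟨x, hx⟩ : ∃ x : X, x ∉ arhTot b x₀ := by
    by_contra h
    push_neg at h
    exact hne (Set.eq_univ_of_forall h)
  -- basic facts
  have hlim : Order.IsSuccLimit ((Cardinal.aleph 1 : Cardinal.{v}).ord) :=
    Cardinal.isSuccLimit_ord (Cardinal.aleph0_le_aleph 1)
  have h0lt : (0 : Ordinal.{v}) < (Cardinal.aleph 1 : Cardinal.{v}).ord :=
    hlim.pos
  have hx₀tot : x₀ ∈ arhTot b x₀ :=
    arh_mem_tot.2 ⟨0, h0lt, arhPrev_subset b x₀ 0 (x₀_mem_arhPrev b x₀ 0)⟩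
  -- for each point of the total set, find a basic neighborhood missing x
  have hsep : ∀ y : X, y ∈ arhTot b x₀ → ∃ n, b y n ⊆ {x}ᶜ := by
    intro y hy
    have hyx : y ≠ x := fun h => hx (h ▸ hy)
    have : ({x}ᶜ : Set X) ∈ 𝓝 y :=
      (isOpen_compl_singleton).mem_nhds (by simpa using hyx)
    exact hb_basis y _ this
  choose! n hn using hsep
  -- compactness of the total set
  have hcpt : IsCompact (arhTot b x₀) := (arh_tot_closed b x₀).isCompact
  have hcover : arhTot b x₀ ⊆ ⋃ y : (arhTot b x₀), b y.1 (n y.1) := by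
    intro y hy
    exact Set.mem_iUnion.2 ⟨⟨y, hy⟩, hb_mem y (n y)⟩
  obtain ⟨t, ht⟩ := hcpt.elim_finite_subcover
    (fun y : (arhTot b x₀) => b y.1 (n y.1)) (fun y => hb_open _ _) hcover
  -- t must be nonempty since x₀ is covered
  rcases t.eq_empty_or_nonempty with rfl | htne
  · simpa using ht hx₀tot
  -- encode the finite family as a sequence
  have hTcount : (Set.image (fun i : (arhTot b x₀) => ((i : X), n i.1))
      (↑t : Set (arhTot b x₀))).Countable := (t.countable_toSet.image _)
  have hTne : (Set.image (fun i : (arhTot b x₀) => ((i : X), n i.1))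
      (↑t : Set (arhTot b x₀))).Nonempty := htne.to_set.image _
  obtain ⟨c, hc⟩ := (Set.Countable.exists_eq_range hTcount hTne)
  -- every value of c has first coordinate in the total set
  have hcmem : ∀ k, (c k).1 ∈ arhTot b x₀ := by
    intro k
    have : c k ∈ Set.range c := Set.mem_range_self k
    rw [← hc] at this
    obtain ⟨i, _, hi⟩ := this
    rw [← hi]
    exact i.2
  -- find a uniform stage
  choose α hαlt hαmem using fun k => arh_mem_tot.1 (hcmem k)
  have hs : (⨆ k, α k) < (Cardinal.aleph 1 : Cardinal.{v}).ord := by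
    refine Ordinal.iSup_lt_ord_lift ?_ hαlt
    rw [Cardinal.isRegular_aleph_one.cof_eq]
    simpa using Cardinal.aleph0_lt_aleph_one
  set γ : Ordinal.{v} := (⨆ k, α k) + 1 with hγdef
  have hγlt : γ < (Cardinal.aleph 1 : Cardinal.{v}).ord := by
    have := hlim.succ_lt hs
    simpa [Order.succ] using this
  have hcprev : ∀ k, (c k).1 ∈ arhPrev b x₀ γ := by
    intro k
    have h1 : α k < γ := lt_of_le_of_lt (Ordinal.le_iSup α k) (Order.lt_succ _)
    exact arhF_subset_prev b x₀ h1 (hαmem k)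
  -- the union of the encoded family equals the finite cover
  have hUeq : (⋃ k, b (c k).1 (c k).2) = ⋃ y ∈ t, b y.1 (n y.1) := by
    apply Set.Subset.antisymm
    · refine Set.iUnion_subset fun k => ?_
      have : c k ∈ Set.range c := Set.mem_range_self k
      rw [← hc] at this
      obtain ⟨i, hit, hi⟩ := this
      rw [← hi]
      exact Set.subset_iUnion₂ (s := fun y _ => b (y : (arhTot b x₀)).1
        (n (y : (arhTot b x₀)).1)) i hit
    · refine Set.iUnion₂_subset fun y hyt => ?_
      have : ((y : X), n y.1) ∈ Set.range c := by
        rw [← hc]; exact ⟨y, hyt, rfl⟩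
      obtain ⟨k, hk⟩ := this
      refine subset_trans ?_ (Set.subset_iUnion
        (fun k => b (c k).1 (c k).2) k)
      rw [hk]
  -- x is outside this union
  have hxU : x ∈ (⋃ k, b (c k).1 (c k).2)ᶜ := by
    rw [hUeq]
    simp only [Set.mem_compl_iff, Set.mem_iUnion]
    rintro ⟨y, hyt, hy⟩
    exact (hn y y.2 hy) rfl
  have hne2 : ((⋃ k, b (c k).1 (c k).2)ᶜ : Set X).Nonempty := ⟨x, hxU⟩
  -- the witness point
  have hz : arhPick b x₀ c ∈ arhWit b x₀ (arhPrev b x₀ γ) :=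
    ⟨c, hcprev, rfl⟩
  have hz2 : arhPick b x₀ c ∈ (⋃ k, b (c k).1 (c k).2)ᶜ := by
    rw [arhPick, dif_pos hne2]
    exact hne2.some_mem
  have hz3 : arhPick b x₀ c ∈ arhTot b x₀ :=
    arh_mem_tot.2 ⟨γ, hγlt, arhWit_subset b x₀ γ hz⟩
  have hz4 : arhPick b x₀ c ∈ ⋃ y ∈ t, b y.1 (n y.1) := ht hz3
  rw [← hUeq] at hz4
  exact hz2 hz4

end ArhAux

/-- Arhangel'skii (1969): every first-countable compact Hausdorff space has
cardinality at most that of the continuum. -/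
theorem arhangelskii_compact {X : Type u} [TopologicalSpace X] [CompactSpace X]
    [T2Space X] [FirstCountableTopology X] :
    #X ≤ 2 ^ Cardinal.aleph0 := by
  rcases isEmpty_or_nonempty X with hE | hNE
  · simp [Cardinal.mk_eq_zero X]
  · obtain ⟨x₀⟩ := hNE
    -- choose a countable open neighborhood basis at each point
    have hbase : ∀ x : X, ∃ s : ℕ → Set X,
        (∀ n, IsOpen (s n)) ∧ (∀ n, x ∈ s n) ∧
        (∀ u ∈ nhds x, ∃ n, s n ⊆ u) := by
      intro x
      obtain ⟨s, hs⟩ := (nhds x).exists_antitone_basis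
      refine ⟨fun n => interior (s n), fun n => isOpen_interior, ?_, ?_⟩
      · intro n
        exact mem_interior_iff_mem_nhds.2 (hs.1.mem_of_mem trivial)
      · intro u hu
        obtain ⟨n, -, hn⟩ := hs.1.mem_iff.1 hu
        exact ⟨n, interior_subset.trans hn⟩
    choose b hb_open hb_mem hb_basis using hbase
    have htot := arh_tot_eq_univ b x₀ hb_open hb_mem hb_basis
    have h1 : #X = #(arhTot b x₀) := by
      rw [htot, Cardinal.mk_univ]
    rw [h1, Cardinal.two_power_aleph0]
    exact arh_mk_tot_le b x₀
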